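/- If (t₀,…,t₀) ∈ F(w, Γ(g)) for some w ∈ D(t₀), then d(w,Γ(f)) = 0, d(w,Γ(g)) ≠ 0, and σ(w)/(d(w,Γ(g)) − d(w,Γ(f))) = 1/t₀. Hence w ∈ T₊ and the smallest candidate positive real pole α equals 1/t₀. -/
import Mathlib


open Finset Pointwise

variable {n : ℕ}

/-- The pairing `⟨k,x⟩ = ∑ i, k i * x i`. -/
noncomputable def dotp (k x : Fin n → ℝ) : ℝ := ∑ i, k i * x i

/-- Convex hull of the union of translated positive orthants `m + ℝ₊ⁿ`. -/
def orthHull (S : Set (Fin n → ℝ)) : Set (Fin n → ℝ) :=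
  convexHull ℝ (⋃ m ∈ S, {x : Fin n → ℝ | ∀ i, m i ≤ x i})

/-- `Γ` is a Newton polyhedron: the convex hull of `⋃_{m ∈ supp} (m + ℝ₊ⁿ)`
for a nonempty finite set of lattice points (the support of a polynomial
vanishing at the origin). -/
def IsNewtonPolyhedron (Γ : Set (Fin n → ℝ)) : Prop :=
  ∃ S : Finset (Fin n → ℕ), S.Nonempty ∧
    Γ = orthHull ((fun m : Fin n → ℕ => fun i => (m i : ℝ)) '' (S : Set (Fin n → ℕ)))

/-- `d(k,Γ) = min_{x ∈ Γ} ⟨k,x⟩`. -/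
noncomputable def dval (k : Fin n → ℝ) (Γ : Set (Fin n → ℝ)) : ℝ :=
  sInf ((fun x => dotp k x) '' Γ)

/-- First meet locus `F(k,Γ) = {x ∈ Γ : ⟨k,x⟩ = d(k,Γ)}`. -/
def fmeet (k : Fin n → ℝ) (Γ : Set (Fin n → ℝ)) : Set (Fin n → ℝ) :=
  {x ∈ Γ | dotp k x = dval k Γ}

/-- `σ(k) = ∑ i, k i`. -/
noncomputable def sigmaS (k : Fin n → ℝ) : ℝ := ∑ i, k i

/-- The smallest face of `Γ` containing a point `p`: the intersection of all
first meet loci (faces) containing `p`. -/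
def minFace (Γ : Set (Fin n → ℝ)) (p : Fin n → ℝ) : Set (Fin n → ℝ) :=
  ⋂₀ {F | p ∈ F ∧ ∃ k : Fin n → ℝ, (∀ i, 0 ≤ k i) ∧ F = fmeet k Γ}

/-- Cast a lattice vector to `ℝⁿ`. -/
def natVec (w : Fin n → ℕ) : Fin n → ℝ := fun i => (w i : ℝ)

/-- `w` is the primitive normal vector of a facet (face of dimension `n-1`) of `Γ`. -/
def IsPrimFacetNormal (Γ : Set (Fin n → ℝ)) (w : Fin n → ℕ) : Prop :=
  w ≠ 0 ∧ Finset.univ.gcd w = 1 ∧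
    Module.finrank ℝ (affineSpan ℝ (fmeet (natVec w) Γ)).direction = n - 1

/-- `D(t₀)`: primitive normal vectors of the facets of `Γ` containing the
smallest face through the diagonal point `p = (t₀,…,t₀)`. -/
def Dset (Γ : Set (Fin n → ℝ)) (p : Fin n → ℝ) : Set (Fin n → ℕ) :=
  {w | IsPrimFacetNormal Γ w ∧ minFace Γ p ⊆ fmeet (natVec w) Γ}


lemma dotp_add (k x y : Fin n → ℝ) : dotp k (x + y) = dotp k x + dotp k y := by
  simp [dotp, mul_add, Finset.sum_add_distrib]

lemma newton_nonneg {Γ : Set (Fin n → ℝ)} (hΓ : IsNewtonPolyhedron Γ) :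
    ∀ x ∈ Γ, ∀ i, 0 ≤ x i := by
  obtain ⟨S, hS, rfl⟩ := hΓ
  have hconv : Convex ℝ {x : Fin n → ℝ | ∀ i, 0 ≤ x i} := fun a ha b hb s t hs ht hst i =>
    add_nonneg (mul_nonneg hs (ha i)) (mul_nonneg ht (hb i))
  intro x hx
  refine convexHull_min ?_ hconv hx
  rintro y hy
  simp only [Set.mem_iUnion] at hy
  obtain ⟨m, hm, hym⟩ := hy
  obtain ⟨m', _, rfl⟩ := hm
  intro i
  exact le_trans (Nat.cast_nonneg _) (hym i)

lemma newton_nonempty {Γ : Set (Fin n → ℝ)} (hΓ : IsNewtonPolyhedron Γ) : Γ.Nonempty := by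
  obtain ⟨S, ⟨m, hm⟩, rfl⟩ := hΓ
  refine ⟨fun i => (m i : ℝ), subset_convexHull ℝ _ ?_⟩
  exact Set.mem_biUnion ⟨m, hm, rfl⟩ (fun i => le_refl _)

lemma dval_bddBelow {Γ : Set (Fin n → ℝ)} (hΓ : IsNewtonPolyhedron Γ)
    {k : Fin n → ℝ} (hk : ∀ i, 0 ≤ k i) :
    BddBelow ((fun x => dotp k x) '' Γ) := by
  refine ⟨0, ?_⟩
  rintro r ⟨x, hx, rfl⟩
  exact Finset.sum_nonneg fun i _ => mul_nonneg (hk i) (newton_nonneg hΓ x hx i)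

lemma dval_nonneg {Γ : Set (Fin n → ℝ)} (hΓ : IsNewtonPolyhedron Γ)
    {k : Fin n → ℝ} (hk : ∀ i, 0 ≤ k i) : 0 ≤ dval k Γ :=
  Real.sInf_nonneg (by
    rintro r ⟨x, hx, rfl⟩
    exact Finset.sum_nonneg fun i _ => mul_nonneg (hk i) (newton_nonneg hΓ x hx i))

lemma dval_le {Γ : Set (Fin n → ℝ)} (hΓ : IsNewtonPolyhedron Γ)
    {k : Fin n → ℝ} (hk : ∀ i, 0 ≤ k i) {x : Fin n → ℝ} (hx : x ∈ Γ) :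
    dval k Γ ≤ dotp k x :=
  csInf_le (dval_bddBelow hΓ hk) ⟨x, hx, rfl⟩

lemma le_dval_sum {Γf Γg : Set (Fin n → ℝ)} (hΓf : IsNewtonPolyhedron Γf)
    (hΓg : IsNewtonPolyhedron Γg) {k : Fin n → ℝ} (hk : ∀ i, 0 ≤ k i) :
    dval k Γf + dval k Γg ≤ dval k (Γf + Γg) := by
  obtain ⟨a, ha⟩ := newton_nonempty hΓf
  obtain ⟨b, hb⟩ := newton_nonempty hΓg
  refine le_csInf ⟨dotp k (a + b), ⟨a + b, Set.add_mem_add ha hb, rfl⟩⟩ ?_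
  rintro r ⟨x, hx, rfl⟩
  obtain ⟨u, hu, v, hv, rfl⟩ := Set.mem_add.mp hx
  show dval k Γf + dval k Γg ≤ dotp k (u + v)
  rw [dotp_add]
  exact add_le_add (dval_le hΓf hk hu) (dval_le hΓg hk hv)

lemma closure_lb {Γf Γg : Set (Fin n → ℝ)} (hΓf : IsNewtonPolyhedron Γf)
    (hΓg : IsNewtonPolyhedron Γg) {k : Fin n → ℝ} (hk : ∀ i, 0 ≤ k i)
    {x : Fin n → ℝ} (hx : x ∈ closure (Γf + Γg)) :
    dval k Γf + dval k Γg ≤ dotp k x := by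
  have hcont : Continuous fun x : Fin n → ℝ => dotp k x :=
    continuous_finset_sum _ fun i _ => continuous_const.mul (continuous_apply i)
  have hcl : IsClosed {x : Fin n → ℝ | dval k Γf + dval k Γg ≤ dotp k x} :=
    isClosed_le continuous_const hcont
  have hsub : Γf + Γg ⊆ {x : Fin n → ℝ | dval k Γf + dval k Γg ≤ dotp k x} := by
    rintro y hy
    obtain ⟨u, hu, v, hv, rfl⟩ := Set.mem_add.mp hy
    simp only [Set.mem_setOf_eq, dotp_add]
    exact add_le_add (dval_le hΓf hk hu) (dval_le hΓg hk hv)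
  exact closure_minimal hsub hcl hx

/-- if the diagonal point `(t₀,…,t₀)` lies in `F(w,Γ(g))` for some
`w ∈ D(t₀)`, then `d(w,Γ(f)) = 0`, `d(w,Γ(g)) ≠ 0`,
`σ(w)/(d(w,Γ(g)) − d(w,Γ(f))) = 1/t₀`, `w ∈ T₊`, and the smallest candidate
positive real pole `α` equals `1/t₀`. -/

theorem alpha_eq_inv_t0
    (hn : 2 ≤ n)
    (Γf Γg : Set (Fin n → ℝ))
    (hΓf : IsNewtonPolyhedron Γf) (hΓg : IsNewtonPolyhedron Γg)
    (t₀ : ℝ) (ht₀ : 0 < t₀)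
    (hdiag : (fun _ : Fin n => t₀) ∈ frontier (Γf + Γg))
    (w : Fin n → ℕ) (hw : w ∈ Dset (Γf + Γg) (fun _ => t₀))
    (hF : (fun _ : Fin n => t₀) ∈ fmeet (natVec w) Γg) :
    dval (natVec w) Γf = 0 ∧
    dval (natVec w) Γg ≠ 0 ∧
    sigmaS (natVec w) / (dval (natVec w) Γg - dval (natVec w) Γf) = 1 / t₀ ∧
    0 < dval (natVec w) Γg - dval (natVec w) Γf ∧
    sInf {r : ℝ | ∃ v : Fin n → ℕ, v ≠ 0 ∧
        0 < dval (natVec v) Γg - dval (natVec v) Γf ∧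
        r = sigmaS (natVec v) / (dval (natVec v) Γg - dval (natVec v) Γf)}
      = 1 / t₀ := by
  have hk : ∀ v : Fin n → ℕ, ∀ i, (0:ℝ) ≤ natVec v i := fun v i => Nat.cast_nonneg _
  have hdot : ∀ v : Fin n → ℕ, dotp (natVec v) (fun _ => t₀) = sigmaS (natVec v) * t₀ := by
    intro v; simp [dotp, sigmaS, natVec, Finset.sum_mul]
  have hσpos : ∀ v : Fin n → ℕ, v ≠ 0 → 0 < sigmaS (natVec v) := by
    intro v hv
    obtain ⟨i, hi⟩ := Function.ne_iff.mp hv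
    exact Finset.sum_pos' (fun j _ => Nat.cast_nonneg _)
      ⟨i, Finset.mem_univ i, by simpa [natVec] using Nat.pos_of_ne_zero hi⟩
  -- the diagonal point lies in the minimal face, hence in F(w, Γf+Γg)
  have hpmin : (fun _ : Fin n => t₀) ∈ minFace (Γf + Γg) (fun _ => t₀) :=
    Set.mem_sInter.mpr fun F hF => hF.1
  have hpF : (fun _ : Fin n => t₀) ∈ fmeet (natVec w) (Γf + Γg) := hw.2 hpmin
  have hw0 : w ≠ 0 := hw.1.1
  have hσw := hσpos w hw0
  -- d(w, Γg) = σ(w) * t₀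
  have hdg : dval (natVec w) Γg = sigmaS (natVec w) * t₀ := by
    rw [← hF.2, hdot]
  -- d(w, Γf) = 0
  have hsum := le_dval_sum hΓf hΓg (hk w)
  have hfg : dval (natVec w) (Γf + Γg) = sigmaS (natVec w) * t₀ := by
    rw [← hpF.2, hdot]
  have hdf : dval (natVec w) Γf = 0 := by
    have h1 : 0 ≤ dval (natVec w) Γf := dval_nonneg hΓf (hk w)
    have h2 : dval (natVec w) Γf ≤ 0 := by
      rw [hfg, ← hdg] at hsum; linarith
    linarith
  have hpos : 0 < dval (natVec w) Γg - dval (natVec w) Γf := by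
    rw [hdf, hdg, sub_zero]; positivity
  have hratio : sigmaS (natVec w) / (dval (natVec w) Γg - dval (natVec w) Γf) = 1 / t₀ := by
    rw [hdf, hdg, sub_zero, div_eq_div_iff (by positivity) ht₀.ne']; ring
  -- lower bound for all candidates
  have hpcl : (fun _ : Fin n => t₀) ∈ closure (Γf + Γg) := frontier_subset_closure hdiag
  have hlb : ∀ r ∈ {r : ℝ | ∃ v : Fin n → ℕ, v ≠ 0 ∧
      0 < dval (natVec v) Γg - dval (natVec v) Γf ∧
      r = sigmaS (natVec v) / (dval (natVec v) Γg - dval (natVec v) Γf)}, 1 / t₀ ≤ r := by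
    rintro r ⟨v, hv, hDv, rfl⟩
    have hcl := closure_lb hΓf hΓg (hk v) hpcl
    rw [hdot v] at hcl
    have hf0 : 0 ≤ dval (natVec v) Γf := dval_nonneg hΓf (hk v)
    rw [div_le_div_iff₀ ht₀ hDv]
    linarith
  have hmem : sigmaS (natVec w) / (dval (natVec w) Γg - dval (natVec w) Γf) ∈
      {r : ℝ | ∃ v : Fin n → ℕ, v ≠ 0 ∧
        0 < dval (natVec v) Γg - dval (natVec v) Γf ∧
        r = sigmaS (natVec v) / (dval (natVec v) Γg - dval (natVec v) Γf)} :=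
    ⟨w, hw0, hpos, rfl⟩
  refine ⟨hdf, ?_, hratio, hpos, ?_⟩
  · rw [hdg]; positivity
  · refine le_antisymm ?_ (le_csInf ⟨_, hmem⟩ hlb)
    calc sInf _ ≤ sigmaS (natVec w) / (dval (natVec w) Γg - dval (natVec w) Γf) :=
          csInf_le ⟨1 / t₀, hlb⟩ hmem
      _ = 1 / t₀ := hratio
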